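/- Let d_S > 0 and let Λ, β, γ, μ : [0,1] → ℝ be continuous and positive. Let S̃ : [0,1] → ℝ be twice continuously differentiable with S̃'(0) = S̃'(1) = 0 and -d_S·S̃''(x) = Λ(x) - S̃(x) on [0,1], and assume there exists x₀ ∈ [0,1] with β(x₀)·S̃(x₀) > γ(x₀) + μ(x₀). Let (dₙ) be a sequence of positive reals with dₙ → 0, and for each n let (Sₙ, Iₙ) be a pair of twice continuously differentiable positive functions on [0,1] with Sₙ'(0)=Sₙ'(1)=0, Iₙ'(0)=Iₙ'(1)=0, solving -d_S·Sₙ''(x) = Λ(x) - Sₙ(x) - β(x)·Sₙ(x)·Iₙ(x) + γ(x)·Iₙ(x) and -dₙ·Iₙ''(x) = β(x)·Sₙ(x)·Iₙ(x) - (γ(x)+μ(x))·Iₙ(x) for all x ∈ [0,1]. Then there exist a strictly increasing map φ : ℕ → ℕ, a continuous function S₀ : [0,1] → ℝ with S₀ > 0 on [0,1], and a constant I₀ > 0, such that S_{φ(n)} → S₀ uniformly on [0,1] and ∫₀¹ I_{φ(n)}(x) dx → I₀ as n → ∞. -/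

import Mathlib

open Set MeasureTheory intervalIntegral Filter Topology

namespace SIS

lemma contOn_of_deriv {f f' : ℝ → ℝ} {lo hi : ℝ}
    (hd : ∀ x ∈ Icc lo hi, HasDerivWithinAt f (f' x) (Icc lo hi) x) :
    ContinuousOn f (Icc lo hi) :=
  fun x hx => (hd x hx).continuousWithinAt

lemma ii {f : ℝ → ℝ} {a b : ℝ} (hab : a ≤ b) (hsub : Icc a b ⊆ Icc (0:ℝ) 1)
    (hc : ContinuousOn f (Icc (0:ℝ) 1)) : IntervalIntegrable f volume a b := by
  apply ContinuousOn.intervalIntegrable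
  rw [uIcc_of_le hab]
  exact hc.mono hsub

lemma ii01 {f : ℝ → ℝ} (hc : ContinuousOn f (Icc (0:ℝ) 1)) :
    IntervalIntegrable f volume 0 1 := ii zero_le_one (subset_refl _) hc

/-- FTC on a subinterval of [0,1]. -/
lemma ftc {f f' : ℝ → ℝ} {a b : ℝ} (hab : a ≤ b)
    (hsub : Icc a b ⊆ Icc (0:ℝ) 1)
    (hd : ∀ x ∈ Icc (0:ℝ) 1, HasDerivWithinAt f (f' x) (Icc 0 1) x)
    (hc : ContinuousOn f' (Icc (0:ℝ) 1)) :
    ∫ x in a..b, f' x = f b - f a := by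
  apply integral_eq_sub_of_hasDeriv_right_of_le hab
    ((contOn_of_deriv hd).mono hsub)
  · intro x hx
    have hx01 : x ∈ Ioo (0:ℝ) 1 := by
      constructor
      · exact lt_of_le_of_lt (hsub ⟨le_refl a, hab⟩).1 hx.1
      · exact lt_of_lt_of_le hx.2 (hsub ⟨hab, le_refl b⟩).2
    have hmem : Icc (0:ℝ) 1 ∈ nhdsWithin x (Ioi x) :=
      nhdsWithin_le_nhds (Icc_mem_nhds hx01.1 hx01.2)
    exact (hd x ⟨hx01.1.le, hx01.2.le⟩).mono_of_mem_nhdsWithin hmem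
  · exact ii hab hsub hc

lemma pos_ub {f : ℝ → ℝ} (hc : ContinuousOn f (Icc (0:ℝ) 1)) :
    ∃ B, 0 < B ∧ ∀ x ∈ Icc (0:ℝ) 1, |f x| ≤ B := by
  obtain ⟨C, hC⟩ := isCompact_Icc.exists_bound_of_continuousOn hc
  refine ⟨|C| + 1, by positivity, fun x hx => ?_⟩
  have := hC x hx
  rw [Real.norm_eq_abs] at this
  have : |f x| ≤ C := this
  have h2 : C ≤ |C| + 1 := by
    have := le_abs_self C
    linarith
  linarith

lemma pos_min {f : ℝ → ℝ} (hc : ContinuousOn f (Icc (0:ℝ) 1))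
    (hp : ∀ x ∈ Icc (0:ℝ) 1, 0 < f x) :
    ∃ m, 0 < m ∧ ∀ x ∈ Icc (0:ℝ) 1, m ≤ f x := by
  obtain ⟨c, hcmem, hcmin⟩ := isCompact_Icc.exists_isMinOn (nonempty_Icc.2 zero_le_one) hc
  exact ⟨f c, hp c hcmem, fun x hx => hcmin hx⟩

lemma min_right {f f' f'' : ℝ → ℝ}
    (hd1 : ∀ x ∈ Icc (0:ℝ) 1, HasDerivWithinAt f (f' x) (Icc 0 1) x)
    (hd2 : ∀ x ∈ Icc (0:ℝ) 1, HasDerivWithinAt f' (f'' x) (Icc 0 1) x)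
    {c : ℝ} (hc : c ∈ Icc (0:ℝ) 1) (hc1 : c < 1) (hfc : f' c = 0) (hneg : f'' c < 0)
    (hmin : ∀ x ∈ Icc (0:ℝ) 1, f c ≤ f x) : False := by
  have hslope := hasDerivWithinAt_iff_tendsto_slope.1 (hd2 c hc)
  have hev : ∀ᶠ z in nhdsWithin c (Icc (0:ℝ) 1 \ {c}), slope f' c z < 0 :=
    hslope.eventually_lt_const hneg
  rw [eventually_nhdsWithin_iff] at hev
  rw [Metric.eventually_nhds_iff] at hev
  obtain ⟨ε, hε, hev⟩ := hev
  set b := min (c + ε/2) 1 with hb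
  have hcb : c < b := lt_min (by linarith) hc1
  have hb1 : b ≤ 1 := min_le_right _ _
  have hderivneg : ∀ x ∈ Ioo c b, f' x < 0 := by
    intro x hx
    have hx01 : x ∈ Icc (0:ℝ) 1 := ⟨le_trans hc.1 hx.1.le, le_trans hx.2.le hb1⟩
    have hdist : dist x c < ε := by
      rw [Real.dist_eq, abs_of_pos (by linarith [hx.1])]
      have : x < c + ε/2 := lt_of_lt_of_le hx.2 (min_le_left _ _)
      linarith
    have hsl := hev hdist ⟨hx01, by simp [ne_of_gt hx.1]⟩
    rw [slope_def_field, hfc, sub_zero] at hsl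
    have hxc : (0:ℝ) < x - c := by linarith [hx.1]
    by_contra h
    push_neg at h
    have : 0 ≤ f' x / (x - c) := div_nonneg h hxc.le
    linarith
  have hanti : StrictAntiOn f (Icc c b) := by
    apply strictAntiOn_of_deriv_neg (convex_Icc c b)
      ((contOn_of_deriv hd1).mono (Icc_subset_Icc hc.1 hb1))
    intro x hx
    rw [interior_Icc] at hx
    have hx01 : x ∈ Ioo (0:ℝ) 1 :=
      ⟨lt_of_le_of_lt hc.1 hx.1, lt_of_lt_of_le hx.2 hb1⟩
    have hda : HasDerivAt f (f' x) x :=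
      (hd1 x ⟨hx01.1.le, hx01.2.le⟩).hasDerivAt (Icc_mem_nhds hx01.1 hx01.2)
    rw [hda.deriv]
    exact hderivneg x hx
  have := hanti ⟨le_refl c, hcb.le⟩ ⟨hcb.le, le_refl b⟩ hcb
  exact absurd (hmin b ⟨le_trans hc.1 hcb.le, hb1⟩) (by linarith)

lemma min_left {f f' f'' : ℝ → ℝ}
    (hd1 : ∀ x ∈ Icc (0:ℝ) 1, HasDerivWithinAt f (f' x) (Icc 0 1) x)
    (hd2 : ∀ x ∈ Icc (0:ℝ) 1, HasDerivWithinAt f' (f'' x) (Icc 0 1) x)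
    {c : ℝ} (hc : c ∈ Icc (0:ℝ) 1) (hc0 : 0 < c) (hfc : f' c = 0) (hneg : f'' c < 0)
    (hmin : ∀ x ∈ Icc (0:ℝ) 1, f c ≤ f x) : False := by
  have hslope := hasDerivWithinAt_iff_tendsto_slope.1 (hd2 c hc)
  have hev : ∀ᶠ z in nhdsWithin c (Icc (0:ℝ) 1 \ {c}), slope f' c z < 0 :=
    hslope.eventually_lt_const hneg
  rw [eventually_nhdsWithin_iff] at hev
  rw [Metric.eventually_nhds_iff] at hev
  obtain ⟨ε, hε, hev⟩ := hev
  set a := max (c - ε/2) 0 with ha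
  have hac : a < c := max_lt (by linarith) hc0
  have ha0 : 0 ≤ a := le_max_right _ _
  have hderivpos : ∀ x ∈ Ioo a c, 0 < f' x := by
    intro x hx
    have hx01 : x ∈ Icc (0:ℝ) 1 := ⟨le_trans ha0 hx.1.le, le_trans hx.2.le hc.2⟩
    have hdist : dist x c < ε := by
      rw [Real.dist_eq, abs_of_neg (by linarith [hx.2])]
      have : c - ε/2 < x := lt_of_le_of_lt (le_max_left _ _) hx.1
      linarith
    have hsl := hev hdist ⟨hx01, by simp [ne_of_lt hx.2]⟩
    rw [slope_def_field, hfc, sub_zero] at hsl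
    have hxc : x - c < 0 := by linarith [hx.2]
    by_contra h
    push_neg at h
    have : 0 ≤ f' x / (x - c) := div_nonneg_of_nonpos h hxc.le
    linarith
  have hmono : StrictMonoOn f (Icc a c) := by
    apply strictMonoOn_of_deriv_pos (convex_Icc a c)
      ((contOn_of_deriv hd1).mono (Icc_subset_Icc ha0 hc.2))
    intro x hx
    rw [interior_Icc] at hx
    have hx01 : x ∈ Ioo (0:ℝ) 1 :=
      ⟨lt_of_le_of_lt ha0 hx.1, lt_of_lt_of_le hx.2 hc.2⟩
    have hda : HasDerivAt f (f' x) x :=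
      (hd1 x ⟨hx01.1.le, hx01.2.le⟩).hasDerivAt (Icc_mem_nhds hx01.1 hx01.2)
    rw [hda.deriv]
    exact hderivpos x hx
  have := hmono ⟨le_refl a, hac.le⟩ ⟨hac.le, le_refl c⟩ hac
  exact absurd (hmin a ⟨ha0, le_trans hac.le hc.2⟩) (by linarith)

lemma second_deriv_nonneg_at_min {f f' f'' : ℝ → ℝ}
    (hd1 : ∀ x ∈ Icc (0:ℝ) 1, HasDerivWithinAt f (f' x) (Icc 0 1) x)
    (hd2 : ∀ x ∈ Icc (0:ℝ) 1, HasDerivWithinAt f' (f'' x) (Icc 0 1) x)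
    (hbc0 : f' 0 = 0) (hbc1 : f' 1 = 0)
    {c : ℝ} (hc : c ∈ Icc (0:ℝ) 1)
    (hmin : ∀ x ∈ Icc (0:ℝ) 1, f c ≤ f x) : 0 ≤ f'' c := by
  by_contra h
  push_neg at h
  have hfc : f' c = 0 := by
    rcases eq_or_lt_of_le hc.1 with h0 | h0
    · rw [← h0]; exact hbc0
    rcases eq_or_lt_of_le hc.2 with h1 | h1
    · rw [h1]; exact hbc1
    have hda : HasDerivAt f (f' c) c :=
      (hd1 c hc).hasDerivAt (Icc_mem_nhds h0 h1)
    have hlm : IsLocalMin f c := by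
      filter_upwards [Icc_mem_nhds h0 h1] with x hx using hmin x hx
    exact hlm.hasDerivAt_eq_zero hda
  rcases lt_or_eq_of_le hc.2 with h1 | h1
  · exact min_right hd1 hd2 hc h1 hfc h hmin
  · exact min_left hd1 hd2 hc (by rw [h1]; norm_num) hfc h hmin

/-- Lipschitz estimate from a derivative bound. -/
lemma lip_of_deriv_bound {f f' : ℝ → ℝ} {C : ℝ}
    (hd : ∀ x ∈ Icc (0:ℝ) 1, HasDerivWithinAt f (f' x) (Icc 0 1) x)
    (hc : ContinuousOn f' (Icc (0:ℝ) 1))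
    (hC : ∀ x ∈ Icc (0:ℝ) 1, |f' x| ≤ C) :
    ∀ x ∈ Icc (0:ℝ) 1, ∀ y ∈ Icc (0:ℝ) 1, |f x - f y| ≤ C * |x - y| := by
  have key : ∀ x ∈ Icc (0:ℝ) 1, ∀ y ∈ Icc (0:ℝ) 1, y ≤ x → |f x - f y| ≤ C * |x - y| := by
    intro x hx y hy hyx
    have hsub : Icc y x ⊆ Icc (0:ℝ) 1 := Icc_subset_Icc hy.1 hx.2
    have hftc : ∫ t in y..x, f' t = f x - f y := ftc hyx hsub hd hc
    rw [← hftc]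
    calc |∫ t in y..x, f' t| ≤ ∫ t in y..x, |f' t| := abs_integral_le_integral_abs hyx
      _ ≤ ∫ _ in y..x, C := by
          apply integral_mono_on hyx (ii hyx hsub hc.abs) intervalIntegrable_const
          exact fun t ht => hC t (hsub ht)
      _ = C * (x - y) := by rw [intervalIntegral.integral_const, smul_eq_mul]; ring
      _ ≤ C * |x - y| := by
          rw [abs_of_nonneg (by linarith)]
  intro x hx y hy
  rcases le_total y x with h | h
  · exact key x hx y hy h
  · rw [abs_sub_comm (f x), abs_sub_comm x]
    exact key y hy x hx h

lemma exists_subseq_uniform {F : ℕ → ℝ → ℝ} {M K : ℝ}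
    (hb : ∀ n, ∀ x ∈ Icc (0:ℝ) 1, |F n x| ≤ M)
    (hlip : ∀ n, ∀ x ∈ Icc (0:ℝ) 1, ∀ y ∈ Icc (0:ℝ) 1, |F n x - F n y| ≤ K * |x - y|)
    (hcont : ∀ n, ContinuousOn (F n) (Icc (0:ℝ) 1)) :
    ∃ φ : ℕ → ℕ, StrictMono φ ∧ ∃ G : ℝ → ℝ, ContinuousOn G (Icc (0:ℝ) 1) ∧
      TendstoUniformlyOn (fun n => F (φ n)) G atTop (Icc (0:ℝ) 1) := by
  set α := ↥(Icc (0:ℝ) 1)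
  haveI : CompactSpace α := isCompact_iff_compactSpace.mp isCompact_Icc
  set ff : ℕ → (BoundedContinuousFunction α ℝ) := fun n =>
    BoundedContinuousFunction.mkOfCompact ⟨fun x => F n (x : ℝ), (hcont n).restrict⟩ with hff
  set A : Set (BoundedContinuousFunction α ℝ) := Set.range ff with hA
  have hcpt : IsCompact (closure A) := by
    apply BoundedContinuousFunction.arzela_ascoli (Icc (-M) M) isCompact_Icc
    · rintro f x ⟨n, rfl⟩
      have := hb n (x : ℝ) x.2
      constructor
      · have := abs_le.1 this
        exact this.1
      · have := abs_le.1 this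
        exact this.2
    · apply Metric.equicontinuous_of_continuity_modulus (fun t => K * t)
      · have : Continuous (fun t : ℝ => K * t) := continuous_const.mul continuous_id
        simpa using this.tendsto 0
      · rintro x y ⟨f, n, rfl⟩
        simp only [ff, BoundedContinuousFunction.mkOfCompact_apply, ContinuousMap.coe_mk]
        rw [Real.dist_eq, Subtype.dist_eq, Real.dist_eq]
        exact hlip n x x.2 y y.2
  obtain ⟨f₀, _, φ, hφ, hconv⟩ :=
    hcpt.tendsto_subseq (fun n => subset_closure (Set.mem_range_self n))
  refine ⟨φ, hφ, fun x => f₀ (Set.projIcc 0 1 zero_le_one x),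
    (f₀.continuous.comp continuous_projIcc).continuousOn, ?_⟩
  have huc : TendstoUniformly (fun n => ⇑(ff (φ n))) ⇑f₀ atTop :=
    BoundedContinuousFunction.tendsto_iff_tendstoUniformly.1 hconv
  rw [Metric.tendstoUniformly_iff] at huc
  rw [Metric.tendstoUniformlyOn_iff]
  intro ε hε
  filter_upwards [huc ε hε] with n hn x hx
  have := hn ⟨x, hx⟩
  simp only [Set.projIcc_of_mem zero_le_one hx]
  exact this

lemma lower_bound_L2 {v : ℝ → ℝ} {Kv ε : ℝ} (hKv : 0 < Kv) (hε : 0 < ε)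
    (hcont : ContinuousOn v (Icc (0:ℝ) 1))
    (hlip : ∀ x ∈ Icc (0:ℝ) 1, ∀ y ∈ Icc (0:ℝ) 1, |v x - v y| ≤ Kv * |x - y|)
    {x₀ : ℝ} (hx₀ : x₀ ∈ Icc (0:ℝ) 1) (hv : ε ≤ |v x₀|) :
    min (ε/(2*Kv)) (1/2) * (ε/2)^2 ≤ ∫ x in (0:ℝ)..1, (v x)^2 := by
  set r := min (ε/(2*Kv)) (1/2) with hr
  have hr0 : 0 < r := lt_min (by positivity) (by norm_num)
  have hr2 : r ≤ 1/2 := min_le_right _ _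
  have hrK : Kv * r ≤ ε/2 := by
    have : r ≤ ε/(2*Kv) := min_le_left _ _
    calc Kv * r ≤ Kv * (ε/(2*Kv)) := by nlinarith
    _ = ε/2 := by field_simp
  obtain ⟨a, ha0, har, hax⟩ : ∃ a, 0 ≤ a ∧ a + r ≤ 1 ∧ x₀ ∈ Icc a (a + r) := by
    rcases le_or_gt x₀ (1/2) with h | h
    · exact ⟨x₀, hx₀.1, by linarith, ⟨le_refl _, by linarith⟩⟩
    · exact ⟨x₀ - r, by linarith, by linarith [hx₀.2], ⟨by linarith, by linarith⟩⟩
  have hsub : Icc a (a+r) ⊆ Icc (0:ℝ) 1 := Icc_subset_Icc ha0 har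
  have hptw : ∀ y ∈ Icc a (a+r), (ε/2)^2 ≤ (v y)^2 := by
    intro y hy
    have hy01 : y ∈ Icc (0:ℝ) 1 := hsub hy
    have hd : |y - x₀| ≤ r := by
      rw [abs_le]
      constructor <;> [linarith [hy.1, hax.2]; linarith [hy.2, hax.1]]
    have h1 : |v x₀ - v y| ≤ Kv * r := by
      calc |v x₀ - v y| ≤ Kv * |x₀ - y| := hlip x₀ hx₀ y hy01
      _ ≤ Kv * r := by
        have hd' : |x₀ - y| ≤ r := by rwa [abs_sub_comm] at hd
        nlinarith [abs_nonneg (x₀ - y)]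
    have h2 : ε/2 ≤ |v y| := by
      have := abs_sub_abs_le_abs_sub (v x₀) (v y)
      linarith [hrK]
    calc (ε/2)^2 ≤ |v y|^2 := by nlinarith [abs_nonneg (v y)]
    _ = (v y)^2 := sq_abs _
  have hint : IntervalIntegrable (fun x => (v x)^2) volume a (a+r) := by
    apply ContinuousOn.intervalIntegrable
    rw [uIcc_of_le (by linarith)]
    exact ((hcont.mono hsub).pow 2)
  calc r * (ε/2)^2 = ∫ _ in a..(a+r), (ε/2)^2 := by
        rw [intervalIntegral.integral_const, smul_eq_mul]; ring
    _ ≤ ∫ x in a..(a+r), (v x)^2 := by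
        apply integral_mono_on (by linarith) _ hint hptw
        apply _root_.intervalIntegrable_const
    _ ≤ ∫ x in (0:ℝ)..1, (v x)^2 := by
        apply integral_mono_interval ha0 (by linarith) har
        · filter_upwards with x using sq_nonneg _
        · apply ContinuousOn.intervalIntegrable
          rw [uIcc_of_le zero_le_one]
          exact hcont.pow 2

lemma subseq_uniform {F : ℕ → ℝ → ℝ} {G : ℝ → ℝ} {s : Set ℝ} {ψ : ℕ → ℕ}
    (h : TendstoUniformlyOn F G atTop s) (hψ : StrictMono ψ) :
    TendstoUniformlyOn (fun n => F (ψ n)) G atTop s := by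
  intro u hu
  exact (hψ.tendsto_atTop).eventually (h u hu)

end SIS

set_option maxHeartbeats 2000000 in
/-- Asymptotic profile of endemic equilibria as `d_I → 0` with `d_S > 0` fixed,
on the one-dimensional domain `[0,1]`: along a subsequence, `Sₙ` converges
uniformly to a positive continuous function `S₀`, and the total infected
population `∫₀¹ Iₙ` converges to a positive constant `I₀`. -/
theorem stmt_15 (dS : ℝ) (hdS : 0 < dS)
    (Λ β γ μ : ℝ → ℝ)
    (hΛc : ContinuousOn Λ (Set.Icc 0 1)) (hβc : ContinuousOn β (Set.Icc 0 1))
    (hγc : ContinuousOn γ (Set.Icc 0 1)) (hμc : ContinuousOn μ (Set.Icc 0 1))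
    (hΛpos : ∀ x ∈ Set.Icc (0 : ℝ) 1, 0 < Λ x)
    (hβpos : ∀ x ∈ Set.Icc (0 : ℝ) 1, 0 < β x)
    (hγpos : ∀ x ∈ Set.Icc (0 : ℝ) 1, 0 < γ x)
    (hμpos : ∀ x ∈ Set.Icc (0 : ℝ) 1, 0 < μ x)
    -- the disease-free steady state S̃
    (St St' St'' : ℝ → ℝ)
    (hSt1 : ∀ x ∈ Set.Icc (0 : ℝ) 1, HasDerivWithinAt St (St' x) (Set.Icc 0 1) x)
    (hSt2 : ∀ x ∈ Set.Icc (0 : ℝ) 1, HasDerivWithinAt St' (St'' x) (Set.Icc 0 1) x)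
    (hStc : ContinuousOn St'' (Set.Icc 0 1))
    (hbcSt0 : St' 0 = 0) (hbcSt1 : St' 1 = 0)
    (heqSt : ∀ x ∈ Set.Icc (0 : ℝ) 1, -dS * St'' x = Λ x - St x)
    (hx0 : ∃ x₀ ∈ Set.Icc (0 : ℝ) 1, γ x₀ + μ x₀ < β x₀ * St x₀)
    -- the sequence of diffusion rates dₙ → 0
    (dI : ℕ → ℝ) (hdI : ∀ n, 0 < dI n)
    (hdI0 : Filter.Tendsto dI Filter.atTop (nhds 0))
    -- the corresponding endemic equilibria (Sₙ, Iₙ)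
    (S S' S'' I I' I'' : ℕ → ℝ → ℝ)
    (hS1 : ∀ n, ∀ x ∈ Set.Icc (0 : ℝ) 1,
      HasDerivWithinAt (S n) (S' n x) (Set.Icc 0 1) x)
    (hS2 : ∀ n, ∀ x ∈ Set.Icc (0 : ℝ) 1,
      HasDerivWithinAt (S' n) (S'' n x) (Set.Icc 0 1) x)
    (hS''c : ∀ n, ContinuousOn (S'' n) (Set.Icc 0 1))
    (hI1 : ∀ n, ∀ x ∈ Set.Icc (0 : ℝ) 1,
      HasDerivWithinAt (I n) (I' n x) (Set.Icc 0 1) x)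
    (hI2 : ∀ n, ∀ x ∈ Set.Icc (0 : ℝ) 1,
      HasDerivWithinAt (I' n) (I'' n x) (Set.Icc 0 1) x)
    (hI''c : ∀ n, ContinuousOn (I'' n) (Set.Icc 0 1))
    (hSpos : ∀ n, ∀ x ∈ Set.Icc (0 : ℝ) 1, 0 < S n x)
    (hIpos : ∀ n, ∀ x ∈ Set.Icc (0 : ℝ) 1, 0 < I n x)
    (hbcS0 : ∀ n, S' n 0 = 0) (hbcS1 : ∀ n, S' n 1 = 0)
    (hbcI0 : ∀ n, I' n 0 = 0) (hbcI1 : ∀ n, I' n 1 = 0)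
    (heqS : ∀ n, ∀ x ∈ Set.Icc (0 : ℝ) 1,
      -dS * S'' n x = Λ x - S n x - β x * S n x * I n x + γ x * I n x)
    (heqI : ∀ n, ∀ x ∈ Set.Icc (0 : ℝ) 1,
      -dI n * I'' n x = β x * S n x * I n x - (γ x + μ x) * I n x) :
    ∃ φ : ℕ → ℕ, StrictMono φ ∧
      ∃ S₀ : ℝ → ℝ, ContinuousOn S₀ (Set.Icc 0 1) ∧
        (∀ x ∈ Set.Icc (0 : ℝ) 1, 0 < S₀ x) ∧
        TendstoUniformlyOn (fun n => S (φ n)) S₀ Filter.atTop (Set.Icc 0 1) ∧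
        ∃ I₀ : ℝ, 0 < I₀ ∧
          Filter.Tendsto (fun n => ∫ x in (0:ℝ)..1, I (φ n) x)
            Filter.atTop (nhds I₀) := by

  classical
  have h01 : (0:ℝ) ≤ 1 := zero_le_one
  have hne : (Set.Icc (0:ℝ) 1).Nonempty := Set.nonempty_Icc.2 zero_le_one
  -- continuity facts
  have hSc : ∀ n, ContinuousOn (S n) (Set.Icc (0:ℝ) 1) := fun n => SIS.contOn_of_deriv (hS1 n)
  have hS'c : ∀ n, ContinuousOn (S' n) (Set.Icc (0:ℝ) 1) := fun n => SIS.contOn_of_deriv (hS2 n)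
  have hIc : ∀ n, ContinuousOn (I n) (Set.Icc (0:ℝ) 1) := fun n => SIS.contOn_of_deriv (hI1 n)
  have hI'c : ∀ n, ContinuousOn (I' n) (Set.Icc (0:ℝ) 1) := fun n => SIS.contOn_of_deriv (hI2 n)
  have hStc0 : ContinuousOn St (Set.Icc (0:ℝ) 1) := SIS.contOn_of_deriv hSt1
  have hSt'c : ContinuousOn St' (Set.Icc (0:ℝ) 1) := SIS.contOn_of_deriv hSt2
  -- coefficient bounds
  obtain ⟨Λmax, hΛmax0, hΛub⟩ := SIS.pos_ub hΛc
  obtain ⟨βmax, hβmax0, hβub⟩ := SIS.pos_ub hβc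
  obtain ⟨γmax, hγmax0, hγub⟩ := SIS.pos_ub hγc
  obtain ⟨μmax, hμmax0, hμub⟩ := SIS.pos_ub hμc
  obtain ⟨MSt, hMSt0, hStub⟩ := SIS.pos_ub hStc0
  obtain ⟨KSt, hKSt0, hSt'ub⟩ := SIS.pos_ub hSt'c
  obtain ⟨Λmin, hΛmin0, hΛlb⟩ := SIS.pos_min hΛc hΛpos
  obtain ⟨βmin, hβmin0, hβlb⟩ := SIS.pos_min hβc hβpos
  obtain ⟨γmin, hγmin0, hγlb⟩ := SIS.pos_min hγc hγpos
  obtain ⟨μmin, hμmin0, hμlb⟩ := SIS.pos_min hμc hμpos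
  have hΛub' : ∀ x ∈ Set.Icc (0:ℝ) 1, Λ x ≤ Λmax := fun x hx => (abs_le.1 (hΛub x hx)).2
  have hβub' : ∀ x ∈ Set.Icc (0:ℝ) 1, β x ≤ βmax := fun x hx => (abs_le.1 (hβub x hx)).2
  have hγub' : ∀ x ∈ Set.Icc (0:ℝ) 1, γ x ≤ γmax := fun x hx => (abs_le.1 (hγub x hx)).2
  have hμub' : ∀ x ∈ Set.Icc (0:ℝ) 1, μ x ≤ μmax := fun x hx => (abs_le.1 (hμub x hx)).2
  -- continuity of products
  have hβSIc : ∀ n, ContinuousOn (fun x => β x * S n x * I n x) (Set.Icc (0:ℝ) 1) :=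
    fun n => (hβc.mul (hSc n)).mul (hIc n)
  have hγIc : ∀ n, ContinuousOn (fun x => γ x * I n x) (Set.Icc (0:ℝ) 1) :=
    fun n => hγc.mul (hIc n)
  have hμIc : ∀ n, ContinuousOn (fun x => μ x * I n x) (Set.Icc (0:ℝ) 1) :=
    fun n => hμc.mul (hIc n)
  have hγμIc : ∀ n, ContinuousOn (fun x => (γ x + μ x) * I n x) (Set.Icc (0:ℝ) 1) :=
    fun n => (hγc.add hμc).mul (hIc n)
  -- integral identities
  have hintI'' : ∀ n, ∫ x in (0:ℝ)..1, I'' n x = 0 := by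
    intro n
    rw [SIS.ftc h01 (subset_refl _) (hI2 n) (hI''c n), hbcI0 n, hbcI1 n, sub_zero]
  have hintS'' : ∀ n, ∫ x in (0:ℝ)..1, S'' n x = 0 := by
    intro n
    rw [SIS.ftc h01 (subset_refl _) (hS2 n) (hS''c n), hbcS0 n, hbcS1 n, sub_zero]
  have hidI : ∀ n, ∫ x in (0:ℝ)..1, β x * S n x * I n x
      = (∫ x in (0:ℝ)..1, γ x * I n x) + ∫ x in (0:ℝ)..1, μ x * I n x := by
    intro n
    have h1 : ∫ x in (0:ℝ)..1, (β x * S n x * I n x - (γ x + μ x) * I n x) = 0 := by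
      have hcongr : Set.EqOn (fun x => β x * S n x * I n x - (γ x + μ x) * I n x)
          (fun x => -dI n * I'' n x) (Set.uIcc (0:ℝ) 1) := by
        rw [Set.uIcc_of_le h01]
        intro x hx
        simp only
        rw [← heqI n x hx]
      rw [intervalIntegral.integral_congr hcongr, intervalIntegral.integral_const_mul,
        hintI'' n, mul_zero]
    rw [intervalIntegral.integral_sub (SIS.ii01 (hβSIc n)) (SIS.ii01 (hγμIc n))] at h1
    have h3 : ∫ x in (0:ℝ)..1, (γ x + μ x) * I n x
        = (∫ x in (0:ℝ)..1, γ x * I n x) + ∫ x in (0:ℝ)..1, μ x * I n x := by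
      have hcongr2 : Set.EqOn (fun x => (γ x + μ x) * I n x)
          (fun x => γ x * I n x + μ x * I n x) (Set.uIcc (0:ℝ) 1) := fun x _ => by ring
      rw [intervalIntegral.integral_congr hcongr2,
        intervalIntegral.integral_add (SIS.ii01 (hγIc n)) (SIS.ii01 (hμIc n))]
    rw [h3] at h1
    linarith
  have hidS : ∀ n, (∫ x in (0:ℝ)..1, S n x) + (∫ x in (0:ℝ)..1, μ x * I n x)
      = ∫ x in (0:ℝ)..1, Λ x := by
    intro n
    have h1 : ∫ x in (0:ℝ)..1,
        (Λ x - S n x - β x * S n x * I n x + γ x * I n x) = 0 := by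
      have hcongr : Set.EqOn (fun x => Λ x - S n x - β x * S n x * I n x + γ x * I n x)
          (fun x => -dS * S'' n x) (Set.uIcc (0:ℝ) 1) := by
        rw [Set.uIcc_of_le h01]
        intro x hx
        simp only
        rw [← heqS n x hx]
      rw [intervalIntegral.integral_congr hcongr, intervalIntegral.integral_const_mul,
        hintS'' n, mul_zero]
    rw [intervalIntegral.integral_add (SIS.ii01 (f := fun x => Λ x - S n x - β x * S n x * I n x) ((hΛc.sub (hSc n)).sub (hβSIc n)))
        (SIS.ii01 (hγIc n)),
      intervalIntegral.integral_sub (SIS.ii01 (f := fun x => Λ x - S n x) (hΛc.sub (hSc n))) (SIS.ii01 (hβSIc n)),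
      intervalIntegral.integral_sub (SIS.ii01 hΛc) (SIS.ii01 (hSc n))] at h1
    have h2 := hidI n
    linarith
  -- basic integral bounds
  set intΛ : ℝ := ∫ x in (0:ℝ)..1, Λ x with hintΛdef
  have hintΛnn : 0 ≤ intΛ :=
    intervalIntegral.integral_nonneg h01 (fun u hu => (hΛpos u hu).le)
  have hIntSnn : ∀ n, 0 ≤ ∫ x in (0:ℝ)..1, S n x :=
    fun n => intervalIntegral.integral_nonneg h01 (fun u hu => (hSpos n u hu).le)
  have hIntInn : ∀ n, 0 ≤ ∫ x in (0:ℝ)..1, I n x :=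
    fun n => intervalIntegral.integral_nonneg h01 (fun u hu => (hIpos n u hu).le)
  have hIntμInn : ∀ n, 0 ≤ ∫ x in (0:ℝ)..1, μ x * I n x :=
    fun n => intervalIntegral.integral_nonneg h01
      (fun u hu => mul_nonneg (hμpos u hu).le (hIpos n u hu).le)
  have hμIle : ∀ n, (∫ x in (0:ℝ)..1, μ x * I n x) ≤ intΛ :=
    fun n => by linarith [hidS n, hIntSnn n]
  have hIle : ∀ n, (∫ x in (0:ℝ)..1, I n x) ≤ intΛ / μmin := by
    intro n
    rw [le_div_iff₀ hμmin0]
    have h1 : (∫ x in (0:ℝ)..1, I n x) * μmin = ∫ x in (0:ℝ)..1, μmin * I n x := by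
      rw [mul_comm, intervalIntegral.integral_const_mul]
    rw [h1]
    calc ∫ x in (0:ℝ)..1, μmin * I n x ≤ ∫ x in (0:ℝ)..1, μ x * I n x := by
          apply intervalIntegral.integral_mono_on h01
            (SIS.ii01 (continuousOn_const.mul (hIc n))) (SIS.ii01 (hμIc n))
          exact fun x hx => mul_le_mul_of_nonneg_right (hμlb x hx) (hIpos n x hx).le
      _ ≤ intΛ := hμIle n
  set L2 : ℝ := intΛ / μmin with hL2def
  have hL2nn : 0 ≤ L2 := div_nonneg hintΛnn hμmin0.le
  have hγIle : ∀ n, (∫ x in (0:ℝ)..1, γ x * I n x) ≤ γmax * L2 := by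
    intro n
    calc (∫ x in (0:ℝ)..1, γ x * I n x) ≤ ∫ x in (0:ℝ)..1, γmax * I n x := by
          apply intervalIntegral.integral_mono_on h01 (SIS.ii01 (hγIc n))
            (SIS.ii01 (continuousOn_const.mul (hIc n)))
          exact fun x hx => mul_le_mul_of_nonneg_right (hγub' x hx) (hIpos n x hx).le
      _ = γmax * ∫ x in (0:ℝ)..1, I n x := intervalIntegral.integral_const_mul _ _
      _ ≤ γmax * L2 := mul_le_mul_of_nonneg_left (hIle n) hγmax0.le
  have hμIle2 : ∀ n, (∫ x in (0:ℝ)..1, μ x * I n x) ≤ μmax * L2 := by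
    intro n
    calc (∫ x in (0:ℝ)..1, μ x * I n x) ≤ ∫ x in (0:ℝ)..1, μmax * I n x := by
          apply intervalIntegral.integral_mono_on h01 (SIS.ii01 (hμIc n))
            (SIS.ii01 (continuousOn_const.mul (hIc n)))
          exact fun x hx => mul_le_mul_of_nonneg_right (hμub' x hx) (hIpos n x hx).le
      _ = μmax * ∫ x in (0:ℝ)..1, I n x := intervalIntegral.integral_const_mul _ _
      _ ≤ μmax * L2 := mul_le_mul_of_nonneg_left (hIle n) hμmax0.le
  have hβSIle : ∀ n, (∫ x in (0:ℝ)..1, β x * S n x * I n x) ≤ (γmax + μmax) * L2 := by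
    intro n
    rw [hidI n]
    nlinarith [hγIle n, hμIle2 n]
  -- pointwise upper bound via the maximum principle
  set M : ℝ := max Λmax (γmax/βmin) with hMdef
  have hM0 : 0 < M := lt_of_lt_of_le hΛmax0 (le_max_left _ _)
  have hSub2 : ∀ n, ∀ x ∈ Set.Icc (0:ℝ) 1, S n x ≤ M := by
    intro n
    obtain ⟨c, hcmem, hcmax⟩ := isCompact_Icc.exists_isMaxOn hne (hSc n)
    have hd1 : ∀ x ∈ Set.Icc (0:ℝ) 1,
        HasDerivWithinAt (fun y => -S n y) ((fun y => -S' n y) x) (Set.Icc 0 1) x :=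
      fun x hx => (hS1 n x hx).neg
    have hd2 : ∀ x ∈ Set.Icc (0:ℝ) 1,
        HasDerivWithinAt (fun y => -S' n y) ((fun y => -S'' n y) x) (Set.Icc 0 1) x :=
      fun x hx => (hS2 n x hx).neg
    have hmin : ∀ x ∈ Set.Icc (0:ℝ) 1, (fun y => -S n y) c ≤ (fun y => -S n y) x :=
      fun x hx => neg_le_neg (hcmax hx)
    have h2 := SIS.second_deriv_nonneg_at_min hd1 hd2
      (by simp [hbcS0 n]) (by simp [hbcS1 n]) hcmem hmin
    have h2' : S'' n c ≤ 0 := by simpa using h2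
    have heq := heqS n c hcmem
    have hIc0 : 0 < I n c := hIpos n c hcmem
    have hβc0 : 0 < β c := hβpos c hcmem
    have hγcM : γ c ≤ M * β c := by
      have h3 : γmax / βmin ≤ M := le_max_right _ _
      have h4 : γmax ≤ M * βmin := by
        rw [div_le_iff₀ hβmin0] at h3
        linarith
      have h5 : γ c ≤ γmax := hγub' c hcmem
      nlinarith [hβlb c hcmem, hM0]
    have hΛcM : Λ c ≤ M := le_trans (hΛub' c hcmem) (le_max_left _ _)
    have hA1 : 0 ≤ Λ c - S n c - β c * S n c * I n c + γ c * I n c := by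
      nlinarith [heq, h2', hdS]
    have hA2 : γ c * I n c ≤ M * (β c * I n c) :=
      by nlinarith [mul_le_mul_of_nonneg_right hγcM hIc0.le]
    have h1t : (0:ℝ) < 1 + β c * I n c := by nlinarith [mul_pos hβc0 hIc0]
    have hkey : S n c ≤ M := by nlinarith [hA1, hA2, hΛcM, h1t]
    intro x hx
    exact le_trans (hcmax hx) hkey
  -- pointwise lower bound via the minimum principle
  set δ : ℝ := min Λmin (γmin/βmax) with hδdef
  have hδ0 : 0 < δ := lt_min hΛmin0 (div_pos hγmin0 hβmax0)
  have hSlb : ∀ n, ∀ x ∈ Set.Icc (0:ℝ) 1, δ ≤ S n x := by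
    intro n
    obtain ⟨c, hcmem, hcmin⟩ := isCompact_Icc.exists_isMinOn hne (hSc n)
    have h2 := SIS.second_deriv_nonneg_at_min (hS1 n) (hS2 n)
      (hbcS0 n) (hbcS1 n) hcmem (fun x hx => hcmin hx)
    have heq := heqS n c hcmem
    have hIc0 : 0 < I n c := hIpos n c hcmem
    have hβc0 : 0 < β c := hβpos c hcmem
    have hδΛ : δ ≤ Λ c := le_trans (min_le_left _ _) (hΛlb c hcmem)
    have hδγ : δ * β c ≤ γ c := by
      have h3 : δ ≤ γmin / βmax := min_le_right _ _
      have h4 : δ * βmax ≤ γmin := by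
        rw [le_div_iff₀ hβmax0] at h3
        linarith
      have h5 : β c ≤ βmax := hβub' c hcmem
      nlinarith [hδ0.le, hγlb c hcmem]
    have hA1 : Λ c - S n c - β c * S n c * I n c + γ c * I n c ≤ 0 := by
      nlinarith [heq, h2, hdS]
    have h1t : (0:ℝ) < 1 + β c * I n c := by nlinarith [mul_pos hβc0 hIc0]
    have hkey : δ ≤ S n c := by
      nlinarith [hA1, hδΛ, mul_le_mul_of_nonneg_right hδγ hIc0.le, h1t]
    intro x hx
    exact le_trans hkey (hcmin hx)
  -- L¹ bound for S'' and Lipschitz bound for S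
  obtain ⟨C2, hC2def⟩ : ∃ c : ℝ, c = (2*intΛ + 2*((γmax + μmax) * L2))/dS + 1 := ⟨_, rfl⟩
  have hC2pos : 0 < C2 := by
    have h1 : 0 ≤ (2*intΛ + 2*((γmax + μmax) * L2))/dS := by
      apply div_nonneg _ hdS.le
      nlinarith [mul_nonneg (by linarith [hγmax0, hμmax0] : (0:ℝ) ≤ γmax + μmax) hL2nn]
    rw [hC2def]
    linarith
  have hS''L1 : ∀ n, (∫ x in (0:ℝ)..1, |S'' n x|) ≤ C2 := by
    intro n
    have hpt : ∀ x ∈ Set.Icc (0:ℝ) 1,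
        |S'' n x| ≤ (Λ x + S n x + β x * S n x * I n x + γ x * I n x)/dS := by
      intro x hx
      have heq := heqS n x hx
      have hb : |dS * S'' n x| ≤ Λ x + S n x + β x * S n x * I n x + γ x * I n x := by
        have h1 : dS * S'' n x
            = -(Λ x) + S n x + β x * S n x * I n x - γ x * I n x := by linarith [heq]
        rw [h1, abs_le]
        constructor
        · nlinarith [hΛpos x hx, hSpos n x hx,
            mul_pos (mul_pos (hβpos x hx) (hSpos n x hx)) (hIpos n x hx),
            mul_pos (hγpos x hx) (hIpos n x hx)]
        · nlinarith [hΛpos x hx, hSpos n x hx,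
            mul_pos (mul_pos (hβpos x hx) (hSpos n x hx)) (hIpos n x hx),
            mul_pos (hγpos x hx) (hIpos n x hx)]
      have h2 : |S'' n x| = |dS * S'' n x| / dS := by
        rw [abs_mul, abs_of_pos hdS]
        field_simp
      rw [h2]
      gcongr
    have hint1 : (∫ x in (0:ℝ)..1, |S'' n x|)
        ≤ ∫ x in (0:ℝ)..1, (Λ x + S n x + β x * S n x * I n x + γ x * I n x)/dS := by
      apply intervalIntegral.integral_mono_on h01 (SIS.ii01 (hS''c n).abs)
        (SIS.ii01 ((((hΛc.add (hSc n)).add (hβSIc n)).add (hγIc n)).div_const _)) hpt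
    have hsplit : (∫ x in (0:ℝ)..1, (Λ x + S n x + β x * S n x * I n x + γ x * I n x)/dS)
        = (intΛ + (∫ x in (0:ℝ)..1, S n x) + (∫ x in (0:ℝ)..1, β x * S n x * I n x)
            + ∫ x in (0:ℝ)..1, γ x * I n x)/dS := by
      rw [intervalIntegral.integral_div,
        intervalIntegral.integral_add (SIS.ii01 (f := fun x => Λ x + S n x + β x * S n x * I n x) ((hΛc.add (hSc n)).add (hβSIc n)))
          (SIS.ii01 (hγIc n)),
        intervalIntegral.integral_add (SIS.ii01 (f := fun x => Λ x + S n x) (hΛc.add (hSc n))) (SIS.ii01 (hβSIc n)),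
        intervalIntegral.integral_add (SIS.ii01 hΛc) (SIS.ii01 (hSc n))]
    have hSle : (∫ x in (0:ℝ)..1, S n x) ≤ intΛ := by linarith [hidS n, hIntμInn n]
    have hγIle2 : (∫ x in (0:ℝ)..1, γ x * I n x) ≤ (γmax + μmax) * L2 := by
      nlinarith [hγIle n, mul_nonneg hμmax0.le hL2nn]
    calc (∫ x in (0:ℝ)..1, |S'' n x|)
        ≤ (intΛ + (∫ x in (0:ℝ)..1, S n x) + (∫ x in (0:ℝ)..1, β x * S n x * I n x)
            + ∫ x in (0:ℝ)..1, γ x * I n x)/dS := by rw [← hsplit]; exact hint1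
      _ ≤ (2*intΛ + 2*((γmax + μmax) * L2))/dS := by
          gcongr ?_ / dS
          nlinarith [hSle, hβSIle n, hγIle2]
      _ ≤ C2 := by rw [hC2def]; linarith
  have hS'bd : ∀ n, ∀ x ∈ Set.Icc (0:ℝ) 1, |S' n x| ≤ C2 := by
    intro n x hx
    have hftc : ∫ t in (0:ℝ)..x, S'' n t = S' n x - S' n 0 :=
      SIS.ftc hx.1 (Set.Icc_subset_Icc le_rfl hx.2) (hS2 n) (hS''c n)
    rw [hbcS0 n, sub_zero] at hftc
    rw [← hftc]
    calc |∫ t in (0:ℝ)..x, S'' n t| ≤ ∫ t in (0:ℝ)..x, |S'' n t| :=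
          intervalIntegral.abs_integral_le_integral_abs hx.1
      _ ≤ ∫ t in (0:ℝ)..1, |S'' n t| := by
          apply intervalIntegral.integral_mono_interval le_rfl hx.1 hx.2
          · filter_upwards with t using abs_nonneg _
          · exact SIS.ii01 (hS''c n).abs
      _ ≤ C2 := hS''L1 n
  have hSlip : ∀ n, ∀ x ∈ Set.Icc (0:ℝ) 1, ∀ y ∈ Set.Icc (0:ℝ) 1,
      |S n x - S n y| ≤ C2 * |x - y| :=
    fun n => SIS.lip_of_deriv_bound (hS1 n) (hS'c n) (hS'bd n)
  have hStlip : ∀ x ∈ Set.Icc (0:ℝ) 1, ∀ y ∈ Set.Icc (0:ℝ) 1,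
      |St x - St y| ≤ KSt * |x - y| :=
    SIS.lip_of_deriv_bound hSt1 hSt'c hSt'ub
  have hSabs : ∀ n, ∀ x ∈ Set.Icc (0:ℝ) 1, |S n x| ≤ M :=
    fun n x hx => abs_le.2 ⟨by linarith [hSlb n x hx, hδ0], hSub2 n x hx⟩
  -- extraction of the subsequence
  obtain ⟨φ₁, hφ₁, S₀, hS₀c, hS₀u⟩ := SIS.exists_subseq_uniform hSabs hSlip hSc
  have hImem : ∀ k, (∫ x in (0:ℝ)..1, I (φ₁ k) x) ∈ Set.Icc (0:ℝ) L2 :=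
    fun k => ⟨hIntInn _, hIle _⟩
  obtain ⟨I₀, hI₀mem, φ₂, hφ₂, hJconv⟩ := isCompact_Icc.tendsto_subseq hImem
  have hS₀pos : ∀ x ∈ Set.Icc (0:ℝ) 1, 0 < S₀ x := by
    intro x hx
    have hlim := hS₀u.tendsto_at hx
    have : δ ≤ S₀ x :=
      ge_of_tendsto hlim (Filter.Eventually.of_forall fun k => hSlb (φ₁ k) x hx)
    linarith
  have hI₀pos : 0 < I₀ := by
    rcases hI₀mem.1.lt_or_eq with hlt | heqq
    · exact hlt
    exfalso
    have hφmono : StrictMono (φ₁ ∘ φ₂) := hφ₁.comp hφ₂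
    set φ : ℕ → ℕ := φ₁ ∘ φ₂ with hφdef
    have hJ0 : Filter.Tendsto (fun k => ∫ x in (0:ℝ)..1, I (φ k) x)
        Filter.atTop (nhds 0) := by
      have hJ0' := hJconv
      rw [← heqq] at hJ0'
      exact hJ0'
    -- step (a): the energy estimate shows ∫ (S (φ k) - St)² → 0
    set v : ℕ → ℝ → ℝ := fun k x => S (φ k) x - St x with hvdef
    have hvc : ∀ k, ContinuousOn (v k) (Set.Icc (0:ℝ) 1) :=
      fun k => (hSc (φ k)).sub hStc0
    have hv'c : ∀ k, ContinuousOn (fun x => S' (φ k) x - St' x) (Set.Icc (0:ℝ) 1) :=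
      fun k => (hS'c (φ k)).sub hSt'c
    have hv''c : ∀ k, ContinuousOn (fun x => S'' (φ k) x - St'' x) (Set.Icc (0:ℝ) 1) :=
      fun k => (hS''c (φ k)).sub hStc
    have hIBP : ∀ k, (∫ x in (0:ℝ)..1, ((S'' (φ k) x - St'' x) * v k x
        + (S' (φ k) x - St' x) * (S' (φ k) x - St' x))) = 0 := by
      intro k
      have hD : ∀ x ∈ Set.Icc (0:ℝ) 1, HasDerivWithinAt
          (fun y => (S' (φ k) y - St' y) * v k y)
          ((S'' (φ k) x - St'' x) * v k x + (S' (φ k) x - St' x) * (S' (φ k) x - St' x))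
          (Set.Icc 0 1) x := by
        intro x hx
        exact ((hS2 (φ k) x hx).sub (hSt2 x hx)).mul ((hS1 (φ k) x hx).sub (hSt1 x hx))
      rw [SIS.ftc h01 (subset_refl _) hD
        (((hv''c k).mul (hvc k)).add ((hv'c k).mul (hv'c k)))]
      simp [hbcS0, hbcS1, hbcSt0, hbcSt1]
    have henergy : ∀ k, (∫ x in (0:ℝ)..1, (v k x)^2)
        ≤ ∫ x in (0:ℝ)..1, (γ x * I (φ k) x - β x * S (φ k) x * I (φ k) x) * v k x := by
      intro k
      have hptw : Set.EqOn (fun x => dS * ((S'' (φ k) x - St'' x) * v k x))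
          (fun x => (v k x)^2
            - (γ x * I (φ k) x - β x * S (φ k) x * I (φ k) x) * v k x)
          (Set.uIcc (0:ℝ) 1) := by
        rw [Set.uIcc_of_le h01]
        intro x hx
        have h1 := heqS (φ k) x hx
        have h2 := heqSt x hx
        have h3 : dS * (S'' (φ k) x - St'' x)
            = v k x - (γ x * I (φ k) x - β x * S (φ k) x * I (φ k) x) := by
          rw [hvdef]
          simp only
          linarith
        calc dS * ((S'' (φ k) x - St'' x) * v k x)
            = (dS * (S'' (φ k) x - St'' x)) * v k x := by ring
          _ = (v k x - (γ x * I (φ k) x - β x * S (φ k) x * I (φ k) x)) * v k x := by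
              rw [h3]
          _ = (v k x)^2 - (γ x * I (φ k) x - β x * S (φ k) x * I (φ k) x) * v k x := by
              ring
      have hfc : ContinuousOn (fun x => γ x * I (φ k) x - β x * S (φ k) x * I (φ k) x)
          (Set.Icc (0:ℝ) 1) := (hγIc (φ k)).sub (hβSIc (φ k))
      have hsplitIBP : (∫ x in (0:ℝ)..1, (S'' (φ k) x - St'' x) * v k x)
          + (∫ x in (0:ℝ)..1, (S' (φ k) x - St' x) * (S' (φ k) x - St' x)) = 0 := by
        rw [← intervalIntegral.integral_add (SIS.ii01 (f := fun x => (S'' (φ k) x - St'' x) * v k x) ((hv''c k).mul (hvc k)))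
          (SIS.ii01 (f := fun x => (S' (φ k) x - St' x) * (S' (φ k) x - St' x)) ((hv'c k).mul (hv'c k)))]
        exact hIBP k
      have hcongr2 : (∫ x in (0:ℝ)..1, dS * ((S'' (φ k) x - St'' x) * v k x))
          = (∫ x in (0:ℝ)..1, (v k x)^2)
            - ∫ x in (0:ℝ)..1, (γ x * I (φ k) x - β x * S (φ k) x * I (φ k) x) * v k x := by
        rw [intervalIntegral.integral_congr hptw,
          intervalIntegral.integral_sub (SIS.ii01 (f := fun x => v k x ^ 2) ((hvc k).pow 2))
            (SIS.ii01 (f := fun x => (γ x * I (φ k) x - β x * S (φ k) x * I (φ k) x) * v k x) (hfc.mul (hvc k)))]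
      rw [intervalIntegral.integral_const_mul] at hcongr2
      have hBnn : 0 ≤ ∫ x in (0:ℝ)..1, (S' (φ k) x - St' x) * (S' (φ k) x - St' x) :=
        intervalIntegral.integral_nonneg h01 (fun x _ => mul_self_nonneg _)
      nlinarith [hcongr2, hsplitIBP, hBnn, hdS,
        mul_nonneg hdS.le hBnn]
    set Cf : ℝ := (γmax + βmax * M) * (M + MSt) with hCfdef
    have hCf0 : 0 < Cf := by
      apply mul_pos
      · nlinarith [mul_pos hβmax0 hM0]
      · linarith
    have hfv : ∀ k, (∫ x in (0:ℝ)..1,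
        (γ x * I (φ k) x - β x * S (φ k) x * I (φ k) x) * v k x)
        ≤ Cf * ∫ x in (0:ℝ)..1, I (φ k) x := by
      intro k
      have hfc : ContinuousOn (fun x => γ x * I (φ k) x - β x * S (φ k) x * I (φ k) x)
          (Set.Icc (0:ℝ) 1) := (hγIc (φ k)).sub (hβSIc (φ k))
      have hptw : ∀ x ∈ Set.Icc (0:ℝ) 1,
          (γ x * I (φ k) x - β x * S (φ k) x * I (φ k) x) * v k x ≤ Cf * I (φ k) x := by
        intro x hx
        have hI0 := hIpos (φ k) x hx
        have hq1 : γ x * I (φ k) x ≤ γmax * I (φ k) x :=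
          mul_le_mul_of_nonneg_right (hγub' x hx) hI0.le
        have hq2 : β x * S (φ k) x ≤ βmax * M :=
          mul_le_mul (hβub' x hx) (hSub2 (φ k) x hx) (hSpos (φ k) x hx).le hβmax0.le
        have hq2' : β x * S (φ k) x * I (φ k) x ≤ βmax * M * I (φ k) x :=
          mul_le_mul_of_nonneg_right hq2 hI0.le
        have hq3 : 0 ≤ γ x * I (φ k) x :=
          mul_nonneg (hγpos x hx).le hI0.le
        have hq4 : 0 ≤ β x * S (φ k) x * I (φ k) x :=
          mul_nonneg (mul_nonneg (hβpos x hx).le (hSpos (φ k) x hx).le) hI0.le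
        have habsf : |γ x * I (φ k) x - β x * S (φ k) x * I (φ k) x|
            ≤ (γmax + βmax * M) * I (φ k) x := by
          rw [abs_le]
          constructor <;> nlinarith
        have habsv : |v k x| ≤ M + MSt := by
          rw [hvdef]
          simp only
          have h1 := hSabs (φ k) x hx
          have h2 := hStub x hx
          rw [abs_le] at h1 h2 ⊢
          constructor <;> [linarith; linarith]
        calc (γ x * I (φ k) x - β x * S (φ k) x * I (φ k) x) * v k x
            ≤ |(γ x * I (φ k) x - β x * S (φ k) x * I (φ k) x) * v k x| :=
              le_abs_self _
          _ = |γ x * I (φ k) x - β x * S (φ k) x * I (φ k) x| * |v k x| := abs_mul _ _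
          _ ≤ ((γmax + βmax * M) * I (φ k) x) * (M + MSt) := by
              apply mul_le_mul habsf habsv (abs_nonneg _)
              positivity
          _ = Cf * I (φ k) x := by rw [hCfdef]; ring
      calc (∫ x in (0:ℝ)..1,
          (γ x * I (φ k) x - β x * S (φ k) x * I (φ k) x) * v k x)
          ≤ ∫ x in (0:ℝ)..1, Cf * I (φ k) x := by
            apply intervalIntegral.integral_mono_on h01 (SIS.ii01 (hfc.mul (hvc k)))
              (SIS.ii01 (continuousOn_const.mul (hIc (φ k)))) hptw
        _ = Cf * ∫ x in (0:ℝ)..1, I (φ k) x := intervalIntegral.integral_const_mul _ _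
    have hv2to0 : Filter.Tendsto (fun k => ∫ x in (0:ℝ)..1, (v k x)^2)
        Filter.atTop (nhds 0) := by
      have hub : ∀ k, (∫ x in (0:ℝ)..1, (v k x)^2) ≤ Cf * ∫ x in (0:ℝ)..1, I (φ k) x :=
        fun k => le_trans (henergy k) (hfv k)
      have hlb : ∀ k, 0 ≤ ∫ x in (0:ℝ)..1, (v k x)^2 :=
        fun k => intervalIntegral.integral_nonneg h01 (fun x _ => sq_nonneg _)
      have hcb : Filter.Tendsto (fun k => Cf * ∫ x in (0:ℝ)..1, I (φ k) x)
          Filter.atTop (nhds 0) := by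
        simpa using hJ0.const_mul Cf
      exact squeeze_zero hlb hub hcb
    -- step (b): uniform smallness of v
    have hvlip : ∀ k, ∀ x ∈ Set.Icc (0:ℝ) 1, ∀ y ∈ Set.Icc (0:ℝ) 1,
        |v k x - v k y| ≤ (C2 + KSt) * |x - y| := by
      intro k x hx y hy
      have e : v k x - v k y = (S (φ k) x - S (φ k) y) - (St x - St y) := by
        rw [hvdef]; simp only; ring
      rw [e]
      have h1 := hSlip (φ k) x hx y hy
      have h2 := hStlip x hx y hy
      calc |(S (φ k) x - S (φ k) y) - (St x - St y)|
          ≤ |S (φ k) x - S (φ k) y| + |St x - St y| := abs_sub _ _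
        _ ≤ (C2 + KSt) * |x - y| := by linarith
    have hKv0 : 0 < C2 + KSt := by linarith
    have hvsmall : ∀ ε : ℝ, 0 < ε → ∀ᶠ k in Filter.atTop,
        ∀ x ∈ Set.Icc (0:ℝ) 1, |v k x| < ε := by
      intro ε hε
      have hc0 : 0 < min (ε/(2*(C2 + KSt))) (1/2) * (ε/2)^2 := by
        apply mul_pos (lt_min (by positivity) (by norm_num)) (by positivity)
      filter_upwards [hv2to0.eventually_lt_const hc0] with k hk x hx
      by_contra hcon
      push_neg at hcon
      exact absurd (SIS.lower_bound_L2 hKv0 hε (hvc k) (hvlip k) hx hcon)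
        (by linarith)
    -- step (c): the test-function argument near x₀
    obtain ⟨x₀, hx₀mem, hx₀⟩ := hx0
    set g : ℝ → ℝ := fun x => β x * St x - (γ x + μ x) with hgdef
    have hgc : ContinuousOn g (Set.Icc (0:ℝ) 1) := (hβc.mul hStc0).sub (hγc.add hμc)
    have hgx₀ : 0 < g x₀ := by rw [hgdef]; simp only; linarith
    have hcw : ContinuousWithinAt g (Set.Icc (0:ℝ) 1) x₀ := hgc x₀ hx₀mem
    have hevg : ∀ᶠ y in nhdsWithin x₀ (Set.Icc (0:ℝ) 1), g x₀/2 < g y :=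
      hcw.eventually_const_lt (by linarith)
    rw [eventually_nhdsWithin_iff, Metric.eventually_nhds_iff] at hevg
    obtain ⟨ρ, hρ0, hρ⟩ := hevg
    set a : ℝ := max 0 (x₀ - ρ/2) with hadef
    set b : ℝ := min 1 (x₀ + ρ/2) with hbdef
    have hab : a < b := by
      apply max_lt
      · exact lt_min zero_lt_one (by linarith [hx₀mem.1])
      · exact lt_min (by linarith [hx₀mem.2]) (by linarith)
    have ha0 : 0 ≤ a := le_max_left _ _
    have hb1 : b ≤ 1 := min_le_left _ _
    have hsubab : Set.Icc a b ⊆ Set.Icc (0:ℝ) 1 := Set.Icc_subset_Icc ha0 hb1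
    have hgab : ∀ x ∈ Set.Icc a b, g x₀/2 < g x := by
      intro x hx
      apply hρ _ (hsubab hx)
      rw [Real.dist_eq, abs_lt]
      have h1 : x₀ - ρ/2 ≤ a := le_max_right _ _
      have h2 : b ≤ x₀ + ρ/2 := min_le_right _ _
      constructor <;> [linarith [hx.1]; linarith [hx.2]]
    set c0 : ℝ := g x₀/2 with hc0def
    have hc0pos : 0 < c0 := by rw [hc0def]; linarith
    -- the test function
    set pt : ℝ → ℝ := fun x => (x - a) * (b - x) with hptdef
    set pt' : ℝ → ℝ := fun x => (b - x) - (x - a) with hpt'def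
    have hptd : ∀ x : ℝ, HasDerivAt pt (pt' x) x := by
      intro x
      have h1 : HasDerivAt (fun y : ℝ => (y - a) * (b - y))
          (1 * (b - x) + (x - a) * (0 - 1)) x :=
        (((hasDerivAt_id x).sub_const a).mul ((hasDerivAt_const x b).sub (hasDerivAt_id x)))
      have h2 : (1 : ℝ) * (b - x) + (x - a) * (0 - 1) = pt' x := by
        rw [hpt'def]; ring
      rw [hptdef]
      rw [← h2]
      exact h1
    have hptc : Continuous pt := by
      rw [hptdef]
      exact (continuous_id.sub continuous_const).mul (continuous_const.sub continuous_id)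
    have hpt'c : Continuous pt' := by
      rw [hpt'def]
      exact (continuous_const.sub continuous_id).sub (continuous_id.sub continuous_const)
    have hpta : pt a = 0 := by rw [hptdef]; simp
    have hptb : pt b = 0 := by rw [hptdef]; simp
    -- logarithmic derivative
    set u : ℕ → ℝ → ℝ := fun k x => I' (φ k) x / I (φ k) x with hudef
    set u' : ℕ → ℝ → ℝ := fun k x =>
      (I'' (φ k) x * I (φ k) x - I' (φ k) x * I' (φ k) x) / (I (φ k) x)^2 with hu'def
    have hud : ∀ k, ∀ x ∈ Set.Icc (0:ℝ) 1,
        HasDerivWithinAt (u k) (u' k x) (Set.Icc 0 1) x := by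
      intro k x hx
      exact (hI2 (φ k) x hx).div (hI1 (φ k) x hx) (ne_of_gt (hIpos (φ k) x hx))
    have huc : ∀ k, ContinuousOn (u k) (Set.Icc (0:ℝ) 1) := by
      intro k
      exact (hI'c (φ k)).div (hIc (φ k)) (fun x hx => ne_of_gt (hIpos (φ k) x hx))
    have hu'c : ∀ k, ContinuousOn (u' k) (Set.Icc (0:ℝ) 1) := by
      intro k
      apply ContinuousOn.div
      · exact ((hI''c (φ k)).mul (hIc (φ k))).sub ((hI'c (φ k)).mul (hI'c (φ k)))
      · exact (hIc (φ k)).pow 2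
      · exact fun x hx => pow_ne_zero 2 (ne_of_gt (hIpos (φ k) x hx))
    have hkeyid : ∀ k, ∀ x ∈ Set.Icc (0:ℝ) 1,
        (β x * S (φ k) x - (γ x + μ x)) * (pt x)^2
          = -dI (φ k) * ((u' k x + (u k x)^2) * (pt x)^2) := by
      intro k x hx
      have h1 := heqI (φ k) x hx
      have hIx := hIpos (φ k) x hx
      have hIne : I (φ k) x ≠ 0 := ne_of_gt hIx
      have h3 : u' k x + (u k x)^2 = I'' (φ k) x / I (φ k) x := by
        rw [hu'def, hudef]
        simp only
        field_simp
        ring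
      rw [h3]
      have h5 : -dI (φ k) * (I'' (φ k) x / I (φ k) x * (pt x)^2)
          = (-dI (φ k) * I'' (φ k) x) * (pt x)^2 / I (φ k) x := by ring
      rw [h5, h1]
      field_simp
    have hIBP2 : ∀ k, (∫ x in a..b,
        (u' k x * (pt x)^2 + u k x * (2 * pt x * pt' x))) = 0 := by
      intro k
      have hD : ∀ x ∈ Set.Icc (0:ℝ) 1, HasDerivWithinAt
          (fun y => u k y * (pt y)^2)
          (u' k x * (pt x)^2 + u k x * (2 * pt x * pt' x)) (Set.Icc 0 1) x := by
        intro x hx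
        have h1 := (hud k x hx).mul (((hptd x).fun_pow 2).hasDerivWithinAt)
        refine h1.congr_deriv ?_
        push_cast
        ring
      rw [SIS.ftc hab.le hsubab hD
        (((hu'c k).mul ((hptc.pow 2).continuousOn)).add
          ((huc k).mul (((continuous_const.mul hptc).mul hpt'c).continuousOn)))]
      simp [hpta, hptb]
    have hmainineq : ∀ k, (∫ x in a..b, (β x * S (φ k) x - (γ x + μ x)) * (pt x)^2)
        ≤ dI (φ k) * ∫ x in a..b, (pt' x)^2 := by
      intro k
      have hgkc : ContinuousOn (fun x => β x * S (φ k) x - (γ x + μ x))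
          (Set.Icc (0:ℝ) 1) := (hβc.mul (hSc (φ k))).sub (hγc.add hμc)
      have e1 : (∫ x in a..b, (β x * S (φ k) x - (γ x + μ x)) * (pt x)^2)
          = -dI (φ k) * ∫ x in a..b, ((u' k x + (u k x)^2) * (pt x)^2) := by
        rw [← intervalIntegral.integral_const_mul]
        apply intervalIntegral.integral_congr
        rw [Set.uIcc_of_le hab.le]
        intro x hx
        exact hkeyid k x (hsubab hx)
      have int1 : IntervalIntegrable
          (fun x => u' k x * (pt x)^2 + u k x * (2 * pt x * pt' x)) volume a b :=
        SIS.ii hab.le hsubab (((hu'c k).mul ((hptc.pow 2).continuousOn)).add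
          ((huc k).mul (((continuous_const.mul hptc).mul hpt'c).continuousOn)))
      have int2 : IntervalIntegrable
          (fun x => (u k x)^2 * (pt x)^2 - u k x * (2 * pt x * pt' x)) volume a b :=
        SIS.ii hab.le hsubab ((((huc k).pow 2).mul ((hptc.pow 2).continuousOn)).sub
          ((huc k).mul (((continuous_const.mul hptc).mul hpt'c).continuousOn)))
      have e2 : (∫ x in a..b, ((u' k x + (u k x)^2) * (pt x)^2))
          = (∫ x in a..b, (u' k x * (pt x)^2 + u k x * (2 * pt x * pt' x)))
            + ∫ x in a..b, ((u k x)^2 * (pt x)^2 - u k x * (2 * pt x * pt' x)) := by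
        rw [← intervalIntegral.integral_add int1 int2]
        apply intervalIntegral.integral_congr
        intro x _
        simp only
        ring
      rw [e1, e2, hIBP2 k, zero_add]
      have e3 : ∀ x ∈ Set.Icc a b,
          -((pt' x)^2) ≤ (u k x)^2 * (pt x)^2 - u k x * (2 * pt x * pt' x) := by
        intro x _
        nlinarith [sq_nonneg (u k x * pt x - pt' x)]
      have int3 : IntervalIntegrable (fun x => -((pt' x)^2)) volume a b :=
        SIS.ii hab.le hsubab ((hpt'c.pow 2).continuousOn.neg)
      have e4 : (∫ x in a..b, -((pt' x)^2))
          ≤ ∫ x in a..b, ((u k x)^2 * (pt x)^2 - u k x * (2 * pt x * pt' x)) :=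
        intervalIntegral.integral_mono_on hab.le int3 int2 e3
      rw [intervalIntegral.integral_neg] at e4
      have e5 := mul_le_mul_of_nonneg_left e4 (hdI (φ k)).le
      nlinarith [e5]
    -- positivity of ∫ pt²
    have hptint : 0 < ∫ x in a..b, (pt x)^2 := by
      apply intervalIntegral.intervalIntegral_pos_of_pos_on
        (SIS.ii hab.le hsubab ((hptc.pow 2).continuousOn)) _ hab
      intro x hx
      have h1 : 0 < pt x := by
        rw [hptdef]
        exact mul_pos (by linarith [hx.1]) (by linarith [hx.2])
      exact pow_pos h1 2
    set P0 : ℝ := (c0/2) * ∫ x in a..b, (pt x)^2 with hP0def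
    have hP0 : 0 < P0 := mul_pos (by linarith) hptint
    have hdIk0 : Filter.Tendsto (fun k => dI (φ k)) Filter.atTop (nhds 0) :=
      hdI0.comp hφmono.tendsto_atTop
    have hdIkl : ∀ᶠ k in Filter.atTop, dI (φ k) * (∫ x in a..b, (pt' x)^2) < P0 := by
      have h1 : Filter.Tendsto (fun k => dI (φ k) * ∫ x in a..b, (pt' x)^2)
          Filter.atTop (nhds 0) := by
        simpa using hdIk0.mul_const (∫ x in a..b, (pt' x)^2)
      exact h1.eventually_lt_const hP0
    obtain ⟨k, hk1, hk2⟩ := ((hvsmall (c0/(2*βmax)) (by positivity)).and hdIkl).exists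
    have hglb : ∀ x ∈ Set.Icc a b, c0/2 ≤ β x * S (φ k) x - (γ x + μ x) := by
      intro x hx
      have h1 := hgab x hx
      have h2 := hk1 x (hsubab hx)
      have h3 : |β x * v k x| ≤ βmax * |v k x| := by
        rw [abs_mul]
        exact mul_le_mul_of_nonneg_right (hβub x (hsubab hx)) (abs_nonneg _)
      have h4 : β x * S (φ k) x - (γ x + μ x) = g x + β x * v k x := by
        rw [hgdef, hvdef]
        simp only
        ring
      rw [h4]
      have h5 : βmax * |v k x| < βmax * (c0/(2*βmax)) :=
        mul_lt_mul_of_pos_left h2 hβmax0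
      have h6 : βmax * (c0/(2*βmax)) = c0/2 := by field_simp
      have h7 := neg_abs_le (β x * v k x)
      have h8 : c0 < g x := h1
      linarith
    have hLHS : P0 ≤ ∫ x in a..b, (β x * S (φ k) x - (γ x + μ x)) * (pt x)^2 := by
      have hgkc : ContinuousOn (fun x => β x * S (φ k) x - (γ x + μ x))
          (Set.Icc (0:ℝ) 1) := (hβc.mul (hSc (φ k))).sub (hγc.add hμc)
      have hptw2 : ∀ x ∈ Set.Icc a b,
          (c0/2) * (pt x)^2 ≤ (β x * S (φ k) x - (γ x + μ x)) * (pt x)^2 :=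
        fun x hx => mul_le_mul_of_nonneg_right (hglb x hx) (sq_nonneg _)
      calc P0 = ∫ x in a..b, (c0/2) * (pt x)^2 := by
            rw [hP0def, intervalIntegral.integral_const_mul]
        _ ≤ ∫ x in a..b, (β x * S (φ k) x - (γ x + μ x)) * (pt x)^2 := by
            apply intervalIntegral.integral_mono_on hab.le
              (SIS.ii hab.le hsubab (continuousOn_const.mul ((hptc.pow 2).continuousOn)))
              (SIS.ii hab.le hsubab (hgkc.mul ((hptc.pow 2).continuousOn))) hptw2
    linarith [hmainineq k, hLHS, hk2]
  exact ⟨φ₁ ∘ φ₂, hφ₁.comp hφ₂, S₀, hS₀c, hS₀pos,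
    SIS.subseq_uniform (F := fun n => S (φ₁ n)) hS₀u hφ₂, I₀, hI₀pos, hJconv⟩
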